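/- For a permutation π of [n] with Hamming distance d ≥ 2 from the identity, the probability that a uniformly random exchange mutation strictly decreases the Hamming distance is at least d/(n(n-1)) and at most 2d/(n(n-1)). -/

import Mathlib

/-- Hamming distance of a permutation of `Fin n` to the identity. -/
def hamDist {n : ℕ} (π : Equiv.Perm (Fin n)) : ℕ :=
  (Finset.univ.filter fun i => π i ≠ i).card

lemma card_filter_pair {α : Type*} [DecidableEq α] (p : α → Prop) [DecidablePred p]
    {i j : α} (h : i ≠ j) :
    (({i, j} : Finset α).filter p).card =
      (if p i then 1 else 0) + (if p j then 1 else 0) := by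
  rw [Finset.filter_insert, Finset.filter_singleton]
  split_ifs <;> simp [Finset.card_insert_of_notMem, h, *]

lemma hamDist_mul_swap_lt_iff {n : ℕ} (π : Equiv.Perm (Fin n)) {i j : Fin n} (hij : i ≠ j) :
    hamDist (π * Equiv.swap i j) < hamDist π ↔ (π i = j ∨ π j = i) := by
  classical
  set S : Finset (Fin n) := Finset.univ.filter (fun k => π k ≠ k) with hS
  set S' : Finset (Fin n) := Finset.univ.filter (fun k => (π * Equiv.swap i j) k ≠ k) with hS'
  have hout : S' \ {i, j} = S \ {i, j} := by
    ext k
    simp only [hS, hS', Finset.mem_sdiff, Finset.mem_filter, Finset.mem_univ, true_and,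
      Finset.mem_insert, Finset.mem_singleton, not_or]
    constructor
    · rintro ⟨h1, h2, h3⟩
      rw [Equiv.Perm.mul_apply, Equiv.swap_apply_of_ne_of_ne h2 h3] at h1
      exact ⟨h1, h2, h3⟩
    · rintro ⟨h1, h2, h3⟩
      refine ⟨?_, h2, h3⟩
      rw [Equiv.Perm.mul_apply, Equiv.swap_apply_of_ne_of_ne h2 h3]
      exact h1
  have hd1 : hamDist π = (S \ {i, j}).card + (S ∩ {i, j}).card :=
    (Finset.card_sdiff_add_card_inter S {i, j}).symm
  have hd2 : hamDist (π * Equiv.swap i j) = (S \ {i, j}).card + (S' ∩ {i, j}).card := by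
    rw [← hout]; exact (Finset.card_sdiff_add_card_inter S' {i, j}).symm
  have hSint : S ∩ {i, j} = ({i, j} : Finset (Fin n)).filter (fun k => π k ≠ k) := by
    ext k; simp [hS, and_comm]
  have hS'int : S' ∩ {i, j} =
      ({i, j} : Finset (Fin n)).filter (fun k => (π * Equiv.swap i j) k ≠ k) := by
    ext k; rw [hS', Finset.mem_inter, Finset.mem_filter, Finset.mem_filter]
    simp only [Finset.mem_univ, true_and]; tauto
  rw [hd1, hd2, add_lt_add_iff_left, hSint, hS'int, card_filter_pair _ hij,
    card_filter_pair _ hij]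
  have e1 : (π * Equiv.swap i j) i = π j := by
    rw [Equiv.Perm.mul_apply, Equiv.swap_apply_left]
  have e2 : (π * Equiv.swap i j) j = π i := by
    rw [Equiv.Perm.mul_apply, Equiv.swap_apply_right]
  rw [e1, e2]
  constructor
  · intro h
    by_contra hc
    push_neg at hc
    obtain ⟨h1, h2⟩ := hc
    have n1 : π j ≠ i := h2
    have n2 : π i ≠ j := h1
    rw [if_pos n1, if_pos n2] at h
    split_ifs at h <;> omega
  · rintro (h | h)
    · have e3 : π i ≠ i := by rw [h]; exact hij.symm
      have e4 : π j ≠ j := fun h' => hij (π.injective (h.trans h'.symm))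
      have e5 : ¬ (π i ≠ j) := not_not_intro h
      rw [if_pos e3, if_pos e4, if_neg e5]
      split_ifs <;> omega
    · have e3 : π j ≠ j := by rw [h]; exact hij
      have e4 : π i ≠ i := fun h' => hij (π.injective (h'.trans h.symm))
      have e5 : ¬ (π j ≠ i) := not_not_intro h
      rw [if_pos e3, if_pos e4, if_neg e5]
      split_ifs <;> omega

theorem stmt_15 (n : ℕ) (π : Equiv.Perm (Fin n)) (d : ℕ) (hd : hamDist π = d)
    (hd2 : 2 ≤ d) :
    (d : ℚ) / (n * (n - 1)) ≤
      (((Finset.univ ×ˢ Finset.univ).filter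
          (fun p : Fin n × Fin n =>
            p.1 < p.2 ∧ hamDist (π * Equiv.swap p.1 p.2) < d)).card : ℚ)
        / ((n * (n - 1) : ℚ) / 2) ∧
    (((Finset.univ ×ˢ Finset.univ).filter
          (fun p : Fin n × Fin n =>
            p.1 < p.2 ∧ hamDist (π * Equiv.swap p.1 p.2) < d)).card : ℚ)
        / ((n * (n - 1) : ℚ) / 2) ≤ 2 * d / (n * (n - 1)) := by
  classical
  set S : Finset (Fin n) := Finset.univ.filter (fun k => π k ≠ k) with hS
  have hScard : S.card = d := hd
  set f : Fin n → Fin n × Fin n := fun k => if k < π k then (k, π k) else (π k, k) with hf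
  set I : Finset (Fin n × Fin n) :=
    (Finset.univ ×ˢ Finset.univ).filter
      (fun p : Fin n × Fin n => p.1 < p.2 ∧ hamDist (π * Equiv.swap p.1 p.2) < d) with hI
  have hIimg : I = S.image f := by
    ext ⟨i, j⟩
    simp only [hI, Finset.mem_filter, Finset.mem_product, Finset.mem_univ, true_and,
      Finset.mem_image, hS]
    constructor
    · rintro ⟨hlt, himp⟩
      have hij : i ≠ j := ne_of_lt hlt
      rw [← hd] at himp
      rcases (hamDist_mul_swap_lt_iff π hij).mp himp with h | h
      · refine ⟨i, by simp [h, hij.symm], ?_⟩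
        simp [hf, h, hlt]
      · refine ⟨j, by simp [h, hij], ?_⟩
        have hnlt : ¬ (j < π j) := by rw [h]; exact not_lt.mpr hlt.le
        simp only [hf, if_neg hnlt, h]
    · rintro ⟨k, hk, hfk⟩
      rw [← hd]
      by_cases hlt : k < π k
      · have hfk' : f k = (k, π k) := by simp [hf, hlt]
        rw [hfk'] at hfk
        obtain ⟨h1, h2⟩ := Prod.mk.injEq .. ▸ hfk
        subst h1; subst h2
        exact ⟨hlt, (hamDist_mul_swap_lt_iff π (ne_of_lt hlt)).mpr (Or.inl rfl)⟩
      · have hlt' : π k < k := lt_of_le_of_ne (not_lt.mp hlt) hk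
        have hfk' : f k = (π k, k) := by simp [hf, hlt]
        rw [hfk'] at hfk
        obtain ⟨h1, h2⟩ := Prod.mk.injEq .. ▸ hfk
        subst h1; subst h2
        exact ⟨hlt', (hamDist_mul_swap_lt_iff π (ne_of_lt hlt')).mpr (Or.inr rfl)⟩
  -- cardinality bounds
  have hub : I.card ≤ d := by
    rw [hIimg, ← hScard]; exact Finset.card_image_le
  have hlb : d ≤ 2 * I.card := by
    rw [hIimg, ← hScard]
    refine Finset.card_le_mul_card_image S 2 (fun a _ => ?_)
    have hsub : (S.filter fun x => f x = a) ⊆ {a.1, a.2} := by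
      intro x hx
      simp only [Finset.mem_filter] at hx
      have := hx.2
      simp only [Finset.mem_insert, Finset.mem_singleton]
      by_cases hlt : x < π x
      · left; rw [← this]; simp [hf, hlt]
      · right; rw [← this]; simp [hf, hlt]
    calc (S.filter fun x => f x = a).card ≤ ({a.1, a.2} : Finset (Fin n)).card :=
          Finset.card_le_card hsub
      _ ≤ 2 := Finset.card_insert_le _ _ |>.trans (by simp)
  -- n bounds
  have hdn : d ≤ n := by
    rw [← hScard]
    simpa using Finset.card_le_card (Finset.subset_univ S)
  have hn2 : 2 ≤ n := le_trans hd2 hdn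
  have hN : (0 : ℚ) < (n : ℚ) * ((n : ℚ) - 1) := by
    have : (2 : ℚ) ≤ (n : ℚ) := by exact_mod_cast hn2
    nlinarith
  have key : ((I.card : ℚ)) / (((n : ℚ) * ((n : ℚ) - 1)) / 2)
      = 2 * (I.card : ℚ) / ((n : ℚ) * ((n : ℚ) - 1)) := by
    field_simp
  constructor
  · rw [key, div_le_div_iff_of_pos_right hN]
    have : (d : ℚ) ≤ 2 * (I.card : ℚ) := by exact_mod_cast hlb
    linarith
  · rw [key, div_le_div_iff_of_pos_right hN]
    have : (I.card : ℚ) ≤ (d : ℚ) := by exact_mod_cast hub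
    linarith
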